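/- If each of X₁, X₂ ⊆ ℤ² is finite, X₁ ≅ X₂, and the grid graph induced by X₁ is connected, then the grid graph induced by X₂ is connected. In other words, being a coordinated shape is invariant under the equivalence relation ≅. -/

import Mathlib

/-- The `c`-scaling of a set `X ⊆ ℤ²`:
`X^c = {(a,b) : (⌊a/c⌋, ⌊b/c⌋) ∈ X}` (floor division). -/
def scaling (X : Set (ℤ × ℤ)) (c : ℕ) : Set (ℤ × ℤ) :=
  {p | (Int.fdiv p.1 (c : ℤ), Int.fdiv p.2 (c : ℤ)) ∈ X}

/-- The translate `X + v = {p + v : p ∈ X}`. -/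
def translateSet (X : Set (ℤ × ℤ)) (v : ℤ × ℤ) : Set (ℤ × ℤ) :=
  (· + v) '' X

/-- `X₁` and `X₂` are translation-equivalent if `X₂ = X₁ + v` for some `v ∈ ℤ²`. -/
def TransEquiv (X₁ X₂ : Set (ℤ × ℤ)) : Prop :=
  ∃ v : ℤ × ℤ, X₂ = translateSet X₁ v

/-- `X₁ ≅ X₂` iff `X₁^a` is translation-equivalent to `X₂^b`
for some positive integers `a`, `b`. -/
def Cong (X₁ X₂ : Set (ℤ × ℤ)) : Prop :=
  ∃ a b : ℕ, 0 < a ∧ 0 < b ∧ TransEquiv (scaling X₁ a) (scaling X₂ b)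

/-- The grid graph induced by `Y ⊆ ℤ²`: vertices are the points of `Y` and edges
connect exactly those pairs of points at `ℓ¹`-distance 1. -/
def gridGraph (Y : Set (ℤ × ℤ)) : SimpleGraph Y where
  Adj p q := |p.1.1 - q.1.1| + |p.1.2 - q.1.2| = 1
  symm := by
    constructor
    intro p q h
    rw [abs_sub_comm, abs_sub_comm (q.1.2)]
    exact h
  loopless := by
    constructor
    intro p h
    simp at h

/- ### Auxiliary lemmas -/

lemma abs_add_abs_eq_one {u v : ℤ} (h : |u| + |v| = 1) :
    (u = 1 ∧ v = 0) ∨ (u = -1 ∧ v = 0) ∨ (u = 0 ∧ v = 1) ∨ (u = 0 ∧ v = -1) := by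
  rcases abs_cases u with ⟨h1,h2⟩|⟨h1,h2⟩ <;> rcases abs_cases v with ⟨h3,h4⟩|⟨h3,h4⟩ <;> omega

lemma reach_right (Y : Set (ℤ×ℤ)) (b a : ℤ) (a' : ℤ) (hle : a ≤ a')
    (hm : ∀ t, a ≤ t → t ≤ a' → (t, b) ∈ Y) (h : (a,b) ∈ Y) (h' : (a',b) ∈ Y) :
    (gridGraph Y).Reachable ⟨(a,b), h⟩ ⟨(a',b), h'⟩ := by
  refine Int.le_induction
    (motive := fun a' _ => ∀ (_ : ∀ t, a ≤ t → t ≤ a' → (t,b) ∈ Y) (h' : (a',b) ∈ Y),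
      (gridGraph Y).Reachable ⟨(a,b),h⟩ ⟨(a',b),h'⟩) ?_ ?_ a' hle hm h'
  · intro _ h'; rfl
  · intro n hn ih hm h'
    have hmem : (n, b) ∈ Y := hm n hn (by omega)
    have r1 := ih (fun t h1 h2 => hm t h1 (by omega)) hmem
    have adj : (gridGraph Y).Adj ⟨(n,b), hmem⟩ ⟨(n+1,b), h'⟩ := by
      show |n - (n+1)| + |b - b| = 1
      simp
    exact r1.trans adj.reachable

lemma reach_above (Y : Set (ℤ×ℤ)) (a b : ℤ) (b' : ℤ) (hle : b ≤ b')
    (hm : ∀ t, b ≤ t → t ≤ b' → (a, t) ∈ Y) (h : (a,b) ∈ Y) (h' : (a,b') ∈ Y) :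
    (gridGraph Y).Reachable ⟨(a,b), h⟩ ⟨(a,b'), h'⟩ := by
  refine Int.le_induction
    (motive := fun b' _ => ∀ (_ : ∀ t, b ≤ t → t ≤ b' → (a,t) ∈ Y) (h' : (a,b') ∈ Y),
      (gridGraph Y).Reachable ⟨(a,b),h⟩ ⟨(a,b'),h'⟩) ?_ ?_ b' hle hm h'
  · intro _ h'; rfl
  · intro n hn ih hm h'
    have hmem : (a, n) ∈ Y := hm n hn (by omega)
    have r1 := ih (fun t h1 h2 => hm t h1 (by omega)) hmem
    have adj : (gridGraph Y).Adj ⟨(a,n), hmem⟩ ⟨(a,n+1), h'⟩ := by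
      show |a - a| + |n - (n+1)| = 1
      simp
    exact r1.trans adj.reachable

lemma reach_horiz (Y : Set (ℤ×ℤ)) (b a a' : ℤ)
    (hm : ∀ t, (a ≤ t ∧ t ≤ a') ∨ (a' ≤ t ∧ t ≤ a) → (t, b) ∈ Y)
    (h : (a,b) ∈ Y) (h' : (a',b) ∈ Y) :
    (gridGraph Y).Reachable ⟨(a,b), h⟩ ⟨(a',b), h'⟩ := by
  rcases le_total a a' with hle | hle
  · exact reach_right Y b a a' hle (fun t h1 h2 => hm t (Or.inl ⟨h1,h2⟩)) h h'
  · exact (reach_right Y b a' a hle (fun t h1 h2 => hm t (Or.inr ⟨h1,h2⟩)) h' h).symm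

lemma reach_vert (Y : Set (ℤ×ℤ)) (a b b' : ℤ)
    (hm : ∀ t, (b ≤ t ∧ t ≤ b') ∨ (b' ≤ t ∧ t ≤ b) → (a, t) ∈ Y)
    (h : (a,b) ∈ Y) (h' : (a,b') ∈ Y) :
    (gridGraph Y).Reachable ⟨(a,b), h⟩ ⟨(a,b'), h'⟩ := by
  rcases le_total b b' with hle | hle
  · exact reach_above Y a b b' hle (fun t h1 h2 => hm t (Or.inl ⟨h1,h2⟩)) h h'
  · exact (reach_above Y a b' b hle (fun t h1 h2 => hm t (Or.inr ⟨h1,h2⟩)) h' h).symm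

/- fdiv facts -/

lemma fdiv_between {c : ℤ} (hc : 0 < c) {a a' t : ℤ} (heq : a.fdiv c = a'.fdiv c)
    (h1 : a ≤ t) (h2 : t ≤ a') : t.fdiv c = a.fdiv c := by
  have heq' : a / c = a' / c := by
    rw [← Int.fdiv_eq_ediv_of_nonneg _ hc.le, ← Int.fdiv_eq_ediv_of_nonneg _ hc.le]; exact heq
  rw [Int.fdiv_eq_ediv_of_nonneg _ hc.le, Int.fdiv_eq_ediv_of_nonneg _ hc.le]
  exact le_antisymm (heq' ▸ Int.ediv_le_ediv hc h2) (Int.ediv_le_ediv hc h1)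

lemma fdiv_between' {c : ℤ} (hc : 0 < c) {a a' t : ℤ} (heq : a.fdiv c = a'.fdiv c)
    (h : (a ≤ t ∧ t ≤ a') ∨ (a' ≤ t ∧ t ≤ a)) : t.fdiv c = a.fdiv c := by
  rcases h with ⟨h1, h2⟩ | ⟨h1, h2⟩
  · exact fdiv_between hc heq h1 h2
  · rw [fdiv_between hc heq.symm h1 h2, heq]

lemma fdiv_mul {c : ℤ} (hc : 0 < c) (k : ℤ) : (c * k).fdiv c = k := by
  rw [Int.fdiv_eq_ediv_of_nonneg _ hc.le]
  exact Int.mul_ediv_cancel_left k hc.ne'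

lemma fdiv_mul_sub_one {c : ℤ} (hc : 0 < c) (k : ℤ) : (c * k - 1).fdiv c = k - 1 := by
  rw [Int.fdiv_eq_ediv_of_nonneg _ hc.le]
  have h : c * k - 1 = (c - 1) + (k - 1) * c := by ring
  rw [h, Int.add_mul_ediv_right _ _ hc.ne', Int.ediv_eq_zero_of_lt (by omega) (by omega)]
  ring

lemma fdiv_succ {c : ℤ} (hc : 0 < c) (a : ℤ) :
    (a+1).fdiv c = a.fdiv c ∨ (a+1).fdiv c = a.fdiv c + 1 := by
  rw [Int.fdiv_eq_ediv_of_nonneg _ hc.le, Int.fdiv_eq_ediv_of_nonneg _ hc.le]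
  have h1 : a / c ≤ (a+1) / c := Int.ediv_le_ediv hc (by omega)
  have h2 : (a+1) / c ≤ (a + 1 * c) / c := Int.ediv_le_ediv hc (by omega)
  rw [Int.add_mul_ediv_right _ _ hc.ne'] at h2
  omega

/- cell reachability in the scaling -/

lemma cell_reach (X : Set (ℤ × ℤ)) (c : ℕ) (hc : 0 < (c:ℤ)) {a b a' b' : ℤ}
    (ha : a.fdiv c = a'.fdiv c) (hb : b.fdiv c = b'.fdiv c)
    (h : (a,b) ∈ scaling X c) (h' : (a',b') ∈ scaling X c) :
    (gridGraph (scaling X c)).Reachable ⟨(a,b), h⟩ ⟨(a',b'), h'⟩ := by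
  have hmid : (a', b) ∈ scaling X c := by
    show (a'.fdiv c, b.fdiv c) ∈ X
    rw [← ha]; exact h
  have r1 : (gridGraph (scaling X c)).Reachable ⟨(a,b), h⟩ ⟨(a',b), hmid⟩ := by
    refine reach_horiz _ b a a' (fun t ht => ?_) h hmid
    show (t.fdiv c, b.fdiv c) ∈ X
    rw [fdiv_between' hc ha ht]; exact h
  have r2 : (gridGraph (scaling X c)).Reachable ⟨(a',b), hmid⟩ ⟨(a',b'), h'⟩ := by
    refine reach_vert _ a' b b' (fun t ht => ?_) hmid h'
    show (a'.fdiv c, t.fdiv c) ∈ X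
    rw [fdiv_between' hc hb ht, ← ha]; exact h
  exact r1.trans r2

/- reachability between adjacent cells -/

lemma adj_cell_right (X : Set (ℤ × ℤ)) (c : ℕ) (hc : 0 < (c:ℤ)) {x1 x2 : ℤ}
    {p q : ℤ × ℤ} (hp : p ∈ scaling X c) (hq : q ∈ scaling X c)
    (hpx : p.1.fdiv c = x1 ∧ p.2.fdiv c = x2)
    (hqy : q.1.fdiv c = x1 + 1 ∧ q.2.fdiv c = x2) :
    (gridGraph (scaling X c)).Reachable ⟨p, hp⟩ ⟨q, hq⟩ := by
  set C : ℤ := (c : ℤ)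
  have hu1 : (C * (x1+1) - 1).fdiv C = x1 := by rw [fdiv_mul_sub_one hc]; ring
  have hu2 : (C * (x1+1)).fdiv C = x1 + 1 := fdiv_mul hc _
  have hx2 : (C * x2).fdiv C = x2 := fdiv_mul hc _
  have humem : (C * (x1+1) - 1, C * x2) ∈ scaling X c := by
    show ((C * (x1+1) - 1).fdiv C, (C * x2).fdiv C) ∈ X
    rw [hu1, hx2, ← hpx.1, ← hpx.2]
    exact hp
  have hwmem : (C * (x1+1), C * x2) ∈ scaling X c := by
    show ((C * (x1+1)).fdiv C, (C * x2).fdiv C) ∈ X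
    rw [hu2, hx2, ← hqy.1, ← hqy.2]
    exact hq
  have r1 : (gridGraph (scaling X c)).Reachable ⟨p, hp⟩ ⟨(C * (x1+1) - 1, C * x2), humem⟩ := by
    have := cell_reach X c hc (a := p.1) (b := p.2) (a' := C * (x1+1) - 1) (b' := C * x2)
      (by rw [hu1, hpx.1]) (by rw [hx2, hpx.2]) (by simpa using hp) humem
    simpa using this
  have adj : (gridGraph (scaling X c)).Adj ⟨(C * (x1+1) - 1, C * x2), humem⟩
      ⟨(C * (x1+1), C * x2), hwmem⟩ := by
    show |(C * (x1+1) - 1) - (C * (x1+1))| + |C * x2 - C * x2| = 1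
    simp
  have r2 : (gridGraph (scaling X c)).Reachable ⟨(C * (x1+1), C * x2), hwmem⟩ ⟨q, hq⟩ := by
    have := cell_reach X c hc (a := C * (x1+1)) (b := C * x2) (a' := q.1) (b' := q.2)
      (by rw [hu2, hqy.1]) (by rw [hx2, hqy.2]) hwmem (by simpa using hq)
    simpa using this
  exact (r1.trans adj.reachable).trans r2

lemma adj_cell_up (X : Set (ℤ × ℤ)) (c : ℕ) (hc : 0 < (c:ℤ)) {x1 x2 : ℤ}
    {p q : ℤ × ℤ} (hp : p ∈ scaling X c) (hq : q ∈ scaling X c)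
    (hpx : p.1.fdiv c = x1 ∧ p.2.fdiv c = x2)
    (hqy : q.1.fdiv c = x1 ∧ q.2.fdiv c = x2 + 1) :
    (gridGraph (scaling X c)).Reachable ⟨p, hp⟩ ⟨q, hq⟩ := by
  set C : ℤ := (c : ℤ)
  have hu1 : (C * (x2+1) - 1).fdiv C = x2 := by rw [fdiv_mul_sub_one hc]; ring
  have hu2 : (C * (x2+1)).fdiv C = x2 + 1 := fdiv_mul hc _
  have hx1 : (C * x1).fdiv C = x1 := fdiv_mul hc _
  have humem : (C * x1, C * (x2+1) - 1) ∈ scaling X c := by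
    show ((C * x1).fdiv C, (C * (x2+1) - 1).fdiv C) ∈ X
    rw [hu1, hx1, ← hpx.1, ← hpx.2]
    exact hp
  have hwmem : (C * x1, C * (x2+1)) ∈ scaling X c := by
    show ((C * x1).fdiv C, (C * (x2+1)).fdiv C) ∈ X
    rw [hu2, hx1, ← hqy.1, ← hqy.2]
    exact hq
  have r1 : (gridGraph (scaling X c)).Reachable ⟨p, hp⟩ ⟨(C * x1, C * (x2+1) - 1), humem⟩ := by
    have := cell_reach X c hc (a := p.1) (b := p.2) (a' := C * x1) (b' := C * (x2+1) - 1)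
      (by rw [hx1, hpx.1]) (by rw [hu1, hpx.2]) (by simpa using hp) humem
    simpa using this
  have adj : (gridGraph (scaling X c)).Adj ⟨(C * x1, C * (x2+1) - 1), humem⟩
      ⟨(C * x1, C * (x2+1)), hwmem⟩ := by
    show |C * x1 - C * x1| + |(C * (x2+1) - 1) - (C * (x2+1))| = 1
    simp
  have r2 : (gridGraph (scaling X c)).Reachable ⟨(C * x1, C * (x2+1)), hwmem⟩ ⟨q, hq⟩ := by
    have := cell_reach X c hc (a := C * x1) (b := C * (x2+1)) (a' := q.1) (b' := q.2)
      (by rw [hx1, hqy.1]) (by rw [hu2, hqy.2]) hwmem (by simpa using hq)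
    simpa using this
  exact (r1.trans adj.reachable).trans r2

lemma adj_cell_reach (X : Set (ℤ × ℤ)) (c : ℕ) (hc : 0 < (c:ℤ)) {x y : ℤ × ℤ}
    (hadj : |x.1 - y.1| + |x.2 - y.2| = 1)
    {p q : ℤ × ℤ} (hp : p ∈ scaling X c) (hq : q ∈ scaling X c)
    (hpx : p.1.fdiv c = x.1 ∧ p.2.fdiv c = x.2)
    (hqy : q.1.fdiv c = y.1 ∧ q.2.fdiv c = y.2) :
    (gridGraph (scaling X c)).Reachable ⟨p, hp⟩ ⟨q, hq⟩ := by
  rcases abs_add_abs_eq_one hadj with ⟨h1,h2⟩|⟨h1,h2⟩|⟨h1,h2⟩|⟨h1,h2⟩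
  · exact (adj_cell_right X c hc hq hp
      (x1 := y.1) (x2 := y.2) hqy ⟨by omega, by omega⟩).symm
  · exact adj_cell_right X c hc hp hq
      (x1 := x.1) (x2 := x.2) hpx ⟨by omega, by omega⟩
  · exact (adj_cell_up X c hc hq hp
      (x1 := y.1) (x2 := y.2) hqy ⟨by omega, by omega⟩).symm
  · exact adj_cell_up X c hc hp hq
      (x1 := x.1) (x2 := x.2) hpx ⟨by omega, by omega⟩

/- lifting walks to the scaling -/

lemma walk_lift (X : Set (ℤ × ℤ)) (c : ℕ) (hc : 0 < (c:ℤ)) {x y : ↥X}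
    (w : (gridGraph X).Walk x y) :
    ∀ (p q : ℤ × ℤ) (hp : p ∈ scaling X c) (hq : q ∈ scaling X c),
    (p.1.fdiv c, p.2.fdiv c) = x.1 → (q.1.fdiv c, q.2.fdiv c) = y.1 →
    (gridGraph (scaling X c)).Reachable ⟨p, hp⟩ ⟨q, hq⟩ := by
  induction w with
  | nil =>
    intro p q hp hq hpx hqy
    have ha : p.1.fdiv c = q.1.fdiv c := by
      have := hpx.trans hqy.symm
      exact congrArg Prod.fst this
    have hb : p.2.fdiv c = q.2.fdiv c := by
      have := hpx.trans hqy.symm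
      exact congrArg Prod.snd this
    have := cell_reach X c hc ha hb (by simpa using hp) (by simpa using hq)
    simpa using this
  | @cons u z _ h w ih =>
    intro p q hp hq hpx hqy
    set m : ℤ × ℤ := ((c:ℤ) * z.1.1, (c:ℤ) * z.1.2) with hm
    have hmf : (m.1.fdiv c, m.2.fdiv c) = z.1 := by
      simp only [hm, fdiv_mul hc]
    have hmmem : m ∈ scaling X c := by
      show (m.1.fdiv c, m.2.fdiv c) ∈ X
      rw [hmf]; exact z.2
    have r1 := adj_cell_reach X c hc (x := u.1) (y := z.1) h hp hmmem
      ⟨congrArg Prod.fst hpx, congrArg Prod.snd hpx⟩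
      ⟨congrArg Prod.fst hmf, congrArg Prod.snd hmf⟩
    exact r1.trans (ih m q hmmem hq hmf hqy)

/- projecting walks from the scaling -/

lemma walk_proj (X : Set (ℤ × ℤ)) (c : ℕ) (hc : 0 < (c:ℤ)) {P Q : ↥(scaling X c)}
    (w : (gridGraph (scaling X c)).Walk P Q) :
    (gridGraph X).Reachable ⟨(P.1.1.fdiv c, P.1.2.fdiv c), P.2⟩
      ⟨(Q.1.1.fdiv c, Q.1.2.fdiv c), Q.2⟩ := by
  induction w with
  | nil => rfl
  | @cons u z _ h w ih =>
    have hadj : |u.1.1 - z.1.1| + |u.1.2 - z.1.2| = 1 := h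
    have key : ((u.1.1.fdiv c, u.1.2.fdiv c) : ℤ × ℤ) = (z.1.1.fdiv c, z.1.2.fdiv c) ∨
        |u.1.1.fdiv c - z.1.1.fdiv c| + |u.1.2.fdiv c - z.1.2.fdiv c| = 1 := by
      rcases abs_add_abs_eq_one hadj with ⟨h1,h2⟩|⟨h1,h2⟩|⟨h1,h2⟩|⟨h1,h2⟩
      · have e2 : u.1.2 = z.1.2 := by omega
        have e1 : u.1.1 = z.1.1 + 1 := by omega
        rcases fdiv_succ hc z.1.1 with hs | hs
        · left; rw [e1, e2, hs]
        · right; rw [e1, e2, hs]; simp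
      · have e2 : u.1.2 = z.1.2 := by omega
        have e1 : z.1.1 = u.1.1 + 1 := by omega
        rcases fdiv_succ hc u.1.1 with hs | hs
        · left; rw [e2, e1, hs]
        · right; rw [e2, e1, hs]; simp
      · have e1 : u.1.1 = z.1.1 := by omega
        have e2 : u.1.2 = z.1.2 + 1 := by omega
        rcases fdiv_succ hc z.1.2 with hs | hs
        · left; rw [e1, e2, hs]
        · right; rw [e1, e2, hs]; simp
      · have e1 : u.1.1 = z.1.1 := by omega
        have e2 : z.1.2 = u.1.2 + 1 := by omega
        rcases fdiv_succ hc u.1.2 with hs | hs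
        · left; rw [e1, e2, hs]
        · right; rw [e1, e2, hs]; simp
    rcases key with heq | hadj'
    · have : (⟨(u.1.1.fdiv c, u.1.2.fdiv c), u.2⟩ : ↥X)
          = ⟨(z.1.1.fdiv c, z.1.2.fdiv c), z.2⟩ := Subtype.ext heq
      rw [this]
      exact ih
    · have adj : (gridGraph X).Adj ⟨(u.1.1.fdiv c, u.1.2.fdiv c), u.2⟩
          ⟨(z.1.1.fdiv c, z.1.2.fdiv c), z.2⟩ := hadj'
      exact adj.reachable.trans ih

/- the three transfer lemmas -/

lemma scaling_connected (X : Set (ℤ × ℤ)) (c : ℕ) (hc : 0 < c)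
    (h : (gridGraph X).Connected) : (gridGraph (scaling X c)).Connected := by
  have hc' : 0 < (c:ℤ) := by exact_mod_cast hc
  have hne : (scaling X c).Nonempty := by
    obtain ⟨x⟩ := h.nonempty
    refine ⟨((c:ℤ) * x.1.1, (c:ℤ) * x.1.2), ?_⟩
    show (((c:ℤ) * x.1.1).fdiv c, ((c:ℤ) * x.1.2).fdiv c) ∈ X
    rw [fdiv_mul hc', fdiv_mul hc']
    exact x.2
  rw [SimpleGraph.connected_iff]
  refine ⟨fun P Q => ?_, hne.to_subtype⟩
  obtain ⟨p, hp⟩ := P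
  obtain ⟨q, hq⟩ := Q
  have hx : ((p.1.fdiv c, p.2.fdiv c) : ℤ × ℤ) ∈ X := hp
  have hy : ((q.1.fdiv c, q.2.fdiv c) : ℤ × ℤ) ∈ X := hq
  obtain ⟨w⟩ := h.preconnected ⟨(p.1.fdiv c, p.2.fdiv c), hx⟩ ⟨(q.1.fdiv c, q.2.fdiv c), hy⟩
  exact walk_lift X c hc' w p q hp hq rfl rfl

lemma scaling_connected_down (X : Set (ℤ × ℤ)) (c : ℕ) (hc : 0 < c)
    (h : (gridGraph (scaling X c)).Connected) : (gridGraph X).Connected := by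
  have hc' : 0 < (c:ℤ) := by exact_mod_cast hc
  have hne : X.Nonempty := by
    obtain ⟨P⟩ := h.nonempty
    exact ⟨(P.1.1.fdiv c, P.1.2.fdiv c), P.2⟩
  rw [SimpleGraph.connected_iff]
  refine ⟨fun x y => ?_, hne.to_subtype⟩
  have hPm : (((c:ℤ) * x.1.1, (c:ℤ) * x.1.2) : ℤ × ℤ) ∈ scaling X c := by
    show ((((c:ℤ) * x.1.1)).fdiv c, (((c:ℤ) * x.1.2)).fdiv c) ∈ X
    rw [fdiv_mul hc', fdiv_mul hc']
    exact x.2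
  have hQm : (((c:ℤ) * y.1.1, (c:ℤ) * y.1.2) : ℤ × ℤ) ∈ scaling X c := by
    show ((((c:ℤ) * y.1.1)).fdiv c, (((c:ℤ) * y.1.2)).fdiv c) ∈ X
    rw [fdiv_mul hc', fdiv_mul hc']
    exact y.2
  obtain ⟨w⟩ := h.preconnected ⟨_, hPm⟩ ⟨_, hQm⟩
  have r := walk_proj X c hc' w
  have ex : (⟨((((c:ℤ) * x.1.1)).fdiv c, (((c:ℤ) * x.1.2)).fdiv c), hPm⟩ : ↥X) = x := by
    apply Subtype.ext
    show ((((c:ℤ) * x.1.1)).fdiv c, (((c:ℤ) * x.1.2)).fdiv c) = x.1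
    rw [fdiv_mul hc', fdiv_mul hc']
  have ey : (⟨((((c:ℤ) * y.1.1)).fdiv c, (((c:ℤ) * y.1.2)).fdiv c), hQm⟩ : ↥X) = y := by
    apply Subtype.ext
    show ((((c:ℤ) * y.1.1)).fdiv c, (((c:ℤ) * y.1.2)).fdiv c) = y.1
    rw [fdiv_mul hc', fdiv_mul hc']
  rw [ex, ey] at r
  exact r

lemma translate_connected (Y : Set (ℤ × ℤ)) (v : ℤ × ℤ)
    (h : (gridGraph Y).Connected) : (gridGraph (translateSet Y v)).Connected := by
  refine h.map ⟨fun p => ⟨p.1 + v, ⟨p.1, p.2, rfl⟩⟩, ?_⟩ ?_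
  · intro a b hab
    show |(a.1 + v).1 - (b.1 + v).1| + |(a.1 + v).2 - (b.1 + v).2| = 1
    simp only [Prod.fst_add, Prod.snd_add]
    have e1 : a.1.1 + v.1 - (b.1.1 + v.1) = a.1.1 - b.1.1 := by ring
    have e2 : a.1.2 + v.2 - (b.1.2 + v.2) = a.1.2 - b.1.2 := by ring
    rw [e1, e2]
    exact hab
  · rintro ⟨q, p, hp, rfl⟩
    exact ⟨⟨p, hp⟩, rfl⟩

/-- Being a coordinated shape is invariant under `≅`: if `X₁` and `X₂` are finite,
`X₁ ≅ X₂`, and the grid graph induced by `X₁` is connected, then so is the grid graph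
induced by `X₂`. -/
theorem cong_connected (X₁ X₂ : Set (ℤ × ℤ)) (h₁ : X₁.Finite) (h₂ : X₂.Finite)
    (hcong : Cong X₁ X₂) (hconn : (gridGraph X₁).Connected) :
    (gridGraph X₂).Connected := by
  obtain ⟨a, b, ha, hb, v, heq⟩ := hcong
  have hA : (gridGraph (scaling X₁ a)).Connected := scaling_connected X₁ a ha hconn
  have hB : (gridGraph (translateSet (scaling X₁ a) v)).Connected :=
    translate_connected _ v hA
  have hC : (gridGraph (scaling X₂ b)).Connected := by rw [heq]; exact hB
  exact scaling_connected_down X₂ b hb hC
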